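/- For all real numbers c₀ > 0, p and m ≥ 0 there exists a constant C > 0 such that for all t > 0 and all y with 0 < y ≤ √t one has ∫_{1/y²}^{∞} e^{−c₀·σ·t} · σ^p · (σ^{1/2}·y)^{m−1} dσ ≤ C · t^{−p−1} · (y/√t)^{m+1}. -/

import Mathlib

open MeasureTheory Real

open Set Filter

lemma aux_bdd (q c : ℝ) (hc : 0 < c) :
    ∃ A > (0:ℝ), ∀ x : ℝ, 1 ≤ x → x ^ q * Real.exp (-(c * x)) ≤ A := by
  have h := tendsto_rpow_mul_exp_neg_mul_atTop_nhds_zero q c hc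
  have h1 : ∀ᶠ x : ℝ in atTop, x ^ q * Real.exp (-c * x) < 1 :=
    h.eventually_lt_const one_pos
  obtain ⟨X, hX⟩ := eventually_atTop.mp h1
  have hcont : ContinuousOn (fun x : ℝ => x ^ q * Real.exp (-(c * x))) (Icc 1 (max 1 X)) := by
    apply ContinuousOn.mul
    · exact continuousOn_id.rpow_const fun x hx => Or.inl (ne_of_gt (lt_of_lt_of_le one_pos hx.1))
    · exact (Real.continuous_exp.comp (by continuity)).continuousOn
  obtain ⟨B, hB⟩ := isCompact_Icc.exists_bound_of_continuousOn hcont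
  refine ⟨max B 1, lt_of_lt_of_le one_pos (le_max_right _ _), fun x hx => ?_⟩
  rcases le_or_gt x (max 1 X) with hcase | hcase
  · calc x ^ q * Real.exp (-(c * x)) ≤ ‖x ^ q * Real.exp (-(c * x))‖ := le_abs_self _
      _ ≤ B := hB x ⟨hx, hcase⟩
      _ ≤ max B 1 := le_max_left _ _
  · have := hX x (le_of_lt (lt_of_le_of_lt (le_max_right 1 X) hcase))
    rw [neg_mul] at this
    exact le_trans this.le (le_max_right _ _)

lemma aux_int (a b : ℝ) (hb : 0 < b) :
    (∫ x in Set.Ioi a, Real.exp (-(b * x))) = Real.exp (-(b * a)) / b := by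
  have := integral_comp_mul_left_Ioi (fun x => Real.exp (-x)) a hb
  simp only [smul_eq_mul] at this
  rw [this, integral_exp_neg_Ioi]
  field_simp

/-- for all `c₀ > 0`, `p ∈ ℝ` and `m ≥ 0` there is `C > 0` such that for all
`t > 0` and `0 < y ≤ √t`,
`∫_{1/y²}^{∞} e^{−c₀σt} σ^p (σ^{1/2}y)^{m−1} dσ ≤ C · t^{−p−1} · (y/√t)^{m+1}`. -/
theorem statement18 (c₀ p m : ℝ) (hc₀ : 0 < c₀) (hm : 0 ≤ m) :
    ∃ C > (0 : ℝ), ∀ t y : ℝ, 0 < t → 0 < y → y ≤ Real.sqrt t →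
      (∫ σ in Set.Ioi (1 / y ^ 2),
          Real.exp (-(c₀ * σ * t)) * σ ^ p * (Real.sqrt σ * y) ^ (m - 1))
        ≤ C * t ^ (-p - 1) * (y / Real.sqrt t) ^ (m + 1) := by
  set q : ℝ := p + (m - 1) / 2 with hq
  obtain ⟨A, hA, hAbd⟩ := aux_bdd q (c₀ / 2) (by positivity)
  refine ⟨4 * A / c₀ ^ 2, by positivity, fun t y ht hy hyt => ?_⟩
  have hy2t : y ^ 2 ≤ t := by
    nlinarith [Real.sq_sqrt ht.le, Real.sqrt_nonneg t, hyt, hy]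
  set a : ℝ := 1 / y ^ 2 with ha
  have ha0 : 0 < a := by positivity
  set b : ℝ := c₀ * t / 2 with hb
  have hb0 : 0 < b := by positivity
  have hta : 1 ≤ t * a := by
    rw [ha, show t * (1 / y ^ 2) = t / y ^ 2 by ring,
      le_div_iff₀ (by positivity : (0:ℝ) < y ^ 2)]
    linarith
  set K : ℝ := A * t ^ (-q) * y ^ (m - 1) with hK
  have hK0 : 0 ≤ K := by positivity
  have key : ∀ σ ∈ Set.Ioi a,
      Real.exp (-(c₀ * σ * t)) * σ ^ p * (Real.sqrt σ * y) ^ (m - 1)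
        ≤ K * Real.exp (-(b * σ)) := by
    intro σ hσ
    have hσ0 : 0 < σ := lt_of_le_of_lt ha0.le hσ
    have htσ : 1 ≤ t * σ := le_trans hta (by nlinarith [le_of_lt (Set.mem_Ioi.mp hσ)])
    have hσq : (Real.sqrt σ * y) ^ (m - 1) = σ ^ ((m - 1) / 2) * y ^ (m - 1) := by
      rw [Real.mul_rpow (Real.sqrt_nonneg σ) hy.le, Real.sqrt_eq_rpow,
        ← Real.rpow_mul hσ0.le, show (1 / 2) * (m - 1) = (m - 1) / 2 by ring]
    have hσpq : σ ^ p * σ ^ ((m - 1) / 2) = σ ^ q := (Real.rpow_add hσ0 _ _).symm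
    have hts : σ ^ q = t ^ (-q) * (t * σ) ^ q := by
      rw [Real.mul_rpow ht.le hσ0.le, ← mul_assoc, ← Real.rpow_add ht]
      simp
    have hexp : Real.exp (-(c₀ * σ * t)) =
        Real.exp (-(c₀ / 2 * (t * σ))) * Real.exp (-(b * σ)) := by
      rw [← Real.exp_add]; congr 1; rw [hb]; ring
    calc Real.exp (-(c₀ * σ * t)) * σ ^ p * (Real.sqrt σ * y) ^ (m - 1)
        = Real.exp (-(c₀ * σ * t)) * (σ ^ p * σ ^ ((m - 1) / 2)) * y ^ (m - 1) := by
          rw [hσq]; ring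
      _ = Real.exp (-(c₀ * σ * t)) * (t ^ (-q) * (t * σ) ^ q) * y ^ (m - 1) := by
          rw [hσpq, hts]
      _ = ((t * σ) ^ q * Real.exp (-(c₀ / 2 * (t * σ)))) *
            (t ^ (-q) * y ^ (m - 1) * Real.exp (-(b * σ))) := by rw [hexp]; ring
      _ ≤ A * (t ^ (-q) * y ^ (m - 1) * Real.exp (-(b * σ))) := by
          apply mul_le_mul_of_nonneg_right (hAbd (t * σ) htσ)
          positivity
      _ = K * Real.exp (-(b * σ)) := by rw [hK]; ring
  have hgint : IntegrableOn (fun σ : ℝ => K * Real.exp (-(b * σ))) (Set.Ioi a) := by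
    have := (exp_neg_integrableOn_Ioi a hb0).const_mul K
    simpa [neg_mul, IntegrableOn] using this
  have hmono : (∫ σ in Set.Ioi a,
      Real.exp (-(c₀ * σ * t)) * σ ^ p * (Real.sqrt σ * y) ^ (m - 1))
      ≤ ∫ σ in Set.Ioi a, K * Real.exp (-(b * σ)) := by
    refine integral_mono_of_nonneg ?_ hgint ?_
    · filter_upwards [ae_restrict_mem measurableSet_Ioi] with σ hσ
      have hσ0 : 0 < σ := lt_of_le_of_lt ha0.le hσ
      have : (0:ℝ) ≤ Real.sqrt σ * y := by positivity
      positivity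
    · filter_upwards [ae_restrict_mem measurableSet_Ioi] with σ hσ using key σ hσ
  have hval : (∫ σ in Set.Ioi a, K * Real.exp (-(b * σ)))
      = K * (Real.exp (-(b * a)) / b) := by
    rw [integral_const_mul, aux_int a b hb0]
  have hexple : Real.exp (-(b * a)) ≤ (b * a)⁻¹ := by
    rw [Real.exp_neg]
    have hba : 0 < b * a := by positivity
    exact inv_anti₀ hba (le_trans (by linarith) (Real.add_one_le_exp (b * a)))
  have h4 : (b * a)⁻¹ / b = 4 * y ^ 2 / (c₀ ^ 2 * t ^ 2) := by
    rw [hb, ha]; field_simp; ring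
  have h3 : t ^ (-p - 1) = t ^ (-q) * t ^ (1 / 2 * (m + 1)) / t ^ (2:ℕ) := by
    rw [← Real.rpow_natCast t 2, ← Real.rpow_add ht, ← Real.rpow_sub ht]
    congr 1; push_cast; rw [hq]; ring
  have hrhs : 4 * A / c₀ ^ 2 * t ^ (-p - 1) * (y / Real.sqrt t) ^ (m + 1)
      = K * ((b * a)⁻¹ / b) := by
    have h1 : (y / Real.sqrt t) ^ (m + 1) = y ^ (m + 1) / t ^ (1 / 2 * (m + 1)) := by
      rw [Real.div_rpow hy.le (Real.sqrt_nonneg t), Real.sqrt_eq_rpow,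
        ← Real.rpow_mul ht.le]
    have h2 : y ^ (m + 1) = y ^ (m - 1) * y ^ (2:ℕ) := by
      rw [← Real.rpow_natCast y 2, ← Real.rpow_add hy]; congr 1; push_cast; ring
    rw [h1, h2, h3, h4, hK]
    have h5 : t ^ (1 / 2 * (m + 1)) ≠ 0 := by positivity
    field_simp
  calc (∫ σ in Set.Ioi a,
      Real.exp (-(c₀ * σ * t)) * σ ^ p * (Real.sqrt σ * y) ^ (m - 1))
      ≤ K * (Real.exp (-(b * a)) / b) := hval ▸ hmono
    _ ≤ K * ((b * a)⁻¹ / b) := by gcongr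
    _ = 4 * A / c₀ ^ 2 * t ^ (-p - 1) * (y / Real.sqrt t) ^ (m + 1) := hrhs.symm
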